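/- arXiv:2201.03310 — 6 statements merged into one kernel-verified Lean document; each statement's English description precedes it below -/
import Mathlib

section
/- For a connected acyclic unweighted undirected graph with incidence matrix B (with respect to some arbitrary orientation of edges) and Laplacian matrix L = B Bᵀ, it holds that Bᵀ L† B = I, where L† denotes the Moore–Penrose pseudoinverse of L. -/
open Matrix
/-- The four Penrose conditions: `Ld` is the Moore–Penrose pseudoinverse of `L`. -/
def IsMoorePenrose {n : Type*} [Fintype n] [DecidableEq n]
    (L Ld : Matrix n n ℝ) : Prop :=
  L * Ld * L = L ∧ Ld * L * Ld = Ld ∧ (L * Ld)ᵀ = L * Ld ∧ (Ld * L)ᵀ = Ld * L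

/-- Left cancellation by a matrix with trivial kernel. -/
lemma cancel_left_of_kerTrivial {V E α : Type*} [Fintype V] [Fintype E] [Fintype α]
    (B : Matrix V E ℝ) (hinj : ∀ x : E → ℝ, B *ᵥ x = 0 → x = 0)
    (X Y : Matrix E α ℝ) (h : B * X = B * Y) : X = Y := by
  have hz : B * (X - Y) = 0 := by rw [Matrix.mul_sub, h, sub_self]
  have hXY : X - Y = 0 := by
    ext e j
    have hcol : B *ᵥ (fun e => (X - Y) e j) = 0 := by
      funext i
      have := congrFun (congrFun hz i) j
      simpa [Matrix.mul_apply, Matrix.mulVec, dotProduct] using this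
    have := congrFun (hinj _ hcol) e
    simpa using this
  have := sub_eq_zero.mp hXY
  exact this

/-- for a connected acyclic unweighted undirected graph with oriented
incidence matrix `B` and Laplacian `L = B Bᵀ`, it holds that `Bᵀ L† B = I`. -/
theorem stmt_0 {V E : Type*} [Fintype V] [Fintype E] [DecidableEq V] [DecidableEq E]
    (G : SimpleGraph V) (hconn : G.Connected) (hacyc : G.IsAcyclic)
    (s t : E → V) (hst : ∀ e, G.Adj (s e) (t e))
    (huniq : ∀ a b, G.Adj a b → ∃! e, (s e = a ∧ t e = b) ∨ (s e = b ∧ t e = a))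
    (B : Matrix V E ℝ)
    (hB : ∀ i e, B i e = if i = s e then 1 else if i = t e then -1 else 0)
    (Ld : Matrix V V ℝ) (hMP : IsMoorePenrose (B * Bᵀ) Ld) :
    Bᵀ * Ld * B = 1 := by
  classical
  -- Step 1: B has trivial kernel, since the graph is acyclic.
  have hinj : ∀ x : E → ℝ, B *ᵥ x = 0 → x = 0 := by
    intro x hx
    funext e0
    have hadj : G.Adj (s e0) (t e0) := hst e0
    have hbridge : G.IsBridge s(s e0, t e0) :=
      (SimpleGraph.isAcyclic_iff_forall_adj_isBridge.mp hacyc) hadj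
    set G' := G \ SimpleGraph.fromEdgeSet {s(s e0, t e0)} with hG'
    have hnr : ¬ G'.Reachable (s e0) (t e0) :=
      SimpleGraph.isBridge_iff.mp hbridge
    set y : V → ℝ := fun i => if G'.Reachable (s e0) i then 1 else 0 with hy
    -- the cut vector y picks out edge e0
    have hyB : ∀ e, (y ᵥ* B) e = y (s e) - y (t e) := by
      intro e
      have hne : s e ≠ t e := (hst e).ne
      have hBe : ∀ i, B i e =
          (if i = s e then (1:ℝ) else 0) - (if i = t e then (1:ℝ) else 0) := by
        intro i
        rw [hB]
        by_cases h1 : i = s e <;> by_cases h2 : i = t e <;>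
          simp_all
      simp only [vecMul, dotProduct, hBe, mul_sub, Finset.sum_sub_distrib,
        mul_ite, mul_one, mul_zero]
      rw [Finset.sum_ite_eq' Finset.univ (s e) y, Finset.sum_ite_eq' Finset.univ (t e) y]
      simp
    have hyBval : ∀ e, (y ᵥ* B) e = if e = e0 then 1 else 0 := by
      intro e
      rw [hyB]
      by_cases he : e = e0
      · subst he
        have hrefl : G'.Reachable (s e) (s e) := SimpleGraph.Reachable.refl _
        have h1 : y (s e) = 1 := by simp [hy, hrefl]
        have h2 : y (t e) = 0 := by simp [hy, hnr]
        rw [h1, h2]; simp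
      · -- edge e survives in G'
        have hne2 : s(s e, t e) ≠ s(s e0, t e0) := by
          intro hEq
          rw [Sym2.eq_iff] at hEq
          obtain ⟨e', _, hu⟩ := huniq (s e0) (t e0) hadj
          have hA := hu e (by tauto)
          have hBB := hu e0 (by tauto)
          exact he (hA.trans hBB.symm)
        have hadj' : G'.Adj (s e) (t e) := by
          rw [hG']
          simp only [SimpleGraph.sdiff_adj, SimpleGraph.fromEdgeSet_adj]
          exact ⟨hst e, by simp [hne2]⟩
        have hiff : G'.Reachable (s e0) (s e) ↔ G'.Reachable (s e0) (t e) :=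
          ⟨fun h => h.trans hadj'.reachable, fun h => h.trans hadj'.symm.reachable⟩
        have hyy : y (s e) = y (t e) := by
          simp only [hy]
          by_cases hr : G'.Reachable (s e0) (s e)
          · rw [if_pos hr, if_pos (hiff.mp hr)]
          · rw [if_neg hr, if_neg (fun h => hr (hiff.mpr h))]
        rw [hyy]; simp [he]
    have h0 : y ⬝ᵥ (B *ᵥ x) = x e0 := by
      rw [Matrix.dotProduct_mulVec]
      simp only [dotProduct, hyBval, ite_mul, one_mul, zero_mul]
      simp
    rw [hx] at h0
    simpa using h0.symm
  -- Step 3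
  have h1 : B * (Bᵀ * Ld * B * Bᵀ) = B * Bᵀ := by
    calc B * (Bᵀ * Ld * B * Bᵀ) = (B * Bᵀ) * Ld * (B * Bᵀ) := by
          simp only [Matrix.mul_assoc]
      _ = B * Bᵀ := hMP.1
  have h2 : Bᵀ * Ld * B * Bᵀ = Bᵀ := cancel_left_of_kerTrivial B hinj _ _ h1
  have h3 : B * (Bᵀ * Ld * B)ᵀ = B * (1 : Matrix E E ℝ) := by
    rw [Matrix.mul_one]
    calc B * (Bᵀ * Ld * B)ᵀ = (Bᵀ * Ld * B * Bᵀ)ᵀ := by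
          simp only [Matrix.transpose_mul, Matrix.transpose_transpose, Matrix.mul_assoc]
      _ = Bᵀᵀ := by rw [h2]
      _ = B := Matrix.transpose_transpose B
  have h4 : (Bᵀ * Ld * B)ᵀ = 1 := cancel_left_of_kerTrivial B hinj _ _ h3
  calc Bᵀ * Ld * B = ((Bᵀ * Ld * B)ᵀ)ᵀ := (Matrix.transpose_transpose _).symm
    _ = (1 : Matrix E E ℝ)ᵀ := by rw [h4]
    _ = 1 := Matrix.transpose_one
end

section
/- In an acyclic flow network, for any edge {i,j} not in the set of edges with controllable flows, the flow f_{ij} is independent of the amount of commodity supplied at every supplier vertex. Precisely, if {i,j} ∈ E is such that the half-cluster H_{ij} contains no supplier, then for any two commodity vectors m, m′ that agree on all consumer vertices, the corresponding flows satisfy f_{ij} = f′_{ij}. -/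
/-- `reachAvoid G i j v`: `v` lies in the connected component of `G ∖ {i}`
containing `j` (the half-cluster `H_{ij}`). -/
def reachAvoid {V : Type*} (G : SimpleGraph V) (i j v : V) : Prop :=
  Relation.ReflTransGen (fun a b => G.Adj a b ∧ b ≠ i) j v

lemma reach_walk {V : Type*} [DecidableEq V] {G : SimpleGraph V} {i j v : V} (hji : j ≠ i)
    (h : reachAvoid G i j v) : ∃ w : G.Walk j v, i ∉ w.support := by
  induction h with
  | refl =>
    refine ⟨SimpleGraph.Walk.nil, ?_⟩
    simp only [SimpleGraph.Walk.support_nil, List.mem_singleton]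
    exact fun h => hji h.symm
  | tail _ hbc ih =>
    obtain ⟨w, hw⟩ := ih
    refine ⟨w.concat hbc.1, ?_⟩
    simp only [SimpleGraph.Walk.support_concat, List.concat_eq_append,
      List.mem_append, List.mem_singleton]
    rintro (h | h)
    · exact hw h
    · exact hbc.2 h.symm

lemma reach_adj_eq {V : Type*} [DecidableEq V] {G : SimpleGraph V} (hG : G.IsTree) {i j v : V}
    (hij : G.Adj i j) (hv : reachAvoid G i j v) (hvi : G.Adj v i) : v = j := by
  by_contra hne
  obtain ⟨w, hw⟩ := reach_walk hij.ne' hv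
  let p2 : G.Walk j v := SimpleGraph.Walk.cons hij.symm
    (SimpleGraph.Walk.cons hvi.symm SimpleGraph.Walk.nil)
  have hp2 : p2.IsPath := by
    simp only [p2, SimpleGraph.Walk.isPath_def, SimpleGraph.Walk.support_cons,
      SimpleGraph.Walk.support_nil]
    refine List.nodup_cons.2 ⟨?_, List.nodup_cons.2 ⟨?_, by simp⟩⟩
    · simp only [List.mem_cons, List.not_mem_nil, or_false]
      push_neg
      exact ⟨hij.ne', fun h => hne h.symm⟩
    · simpa using hvi.ne'
  have hp1 : (w.toPath : G.Walk j v).IsPath := w.toPath.2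
  have := (hG.existsUnique_path j v).unique hp1 hp2
  have hi2 : i ∈ p2.support := by simp [p2]
  rw [← this] at hi2
  exact hw (SimpleGraph.Walk.support_toPath_subset w hi2)

/-- in an acyclic flow network, if the half-cluster `H_{ij}` of an
edge `{i,j}` contains no supplier (i.e. `β_{ij} = 0`, so `{i,j} ∉ E_cf`), then
the flow `f_{ij}` does not depend on the supplied commodity: any two commodity
vectors `m, m'` agreeing on all consumers yield the same flow on `{i,j}`. -/
theorem stmt_3 {V : Type*} [Fintype V] (G : SimpleGraph V) (hG : G.IsTree)
    (Vs : Set V) (m m' : V → ℝ)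
    (hm : ∀ v, v ∉ Vs → m v = m' v)
    (hsum : ∑ v, m v = 0) (hsum' : ∑ v, m' v = 0)
    (f f' : V → V → ℝ)
    (hanti : ∀ a b, f b a = - f a b) (hanti' : ∀ a b, f' b a = - f' a b)
    (hsupp : ∀ a b, ¬ G.Adj a b → f a b = 0)
    (hsupp' : ∀ a b, ¬ G.Adj a b → f' a b = 0)
    (hcons : ∀ v, ∑ u, f v u = m v) (hcons' : ∀ v, ∑ u, f' v u = m' v)
    (i j : V) (hij : G.Adj i j)
    (hns : ∀ v, reachAvoid G i j v → v ∉ Vs) :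
    f i j = f' i j := by
  classical
  haveI := Classical.decEq V
  set H : Finset V := Finset.univ.filter (fun v => reachAvoid G i j v) with hH
  have hjH : j ∈ H := Finset.mem_filter.2 ⟨Finset.mem_univ _, Relation.ReflTransGen.refl⟩
  have hiH : i ∉ H := by
    simp only [hH, Finset.mem_filter, Finset.mem_univ, true_and]
    intro h
    rcases h.cases_tail with h | ⟨b, _, hb⟩
    · exact hij.ne' h.symm
    · exact hb.2 rfl
  -- closure of H
  have hclosed : ∀ v u, v ∈ H → G.Adj v u → u ≠ i → u ∈ H := by
    intro v u hv hadj hu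
    simp only [hH, Finset.mem_filter, Finset.mem_univ, true_and] at hv ⊢
    exact hv.tail ⟨hadj, hu⟩
  have key : ∀ (g : V → V → ℝ) (n : V → ℝ), (∀ a b, g b a = - g a b) →
      (∀ a b, ¬ G.Adj a b → g a b = 0) → (∀ v, ∑ u, g v u = n v) →
      g j i = ∑ v ∈ H, n v := by
    intro g n ga gs gc
    have split : ∀ v : V, ∑ u, g v u =
        (∑ u ∈ H, g v u) + ∑ u ∈ Finset.univ.filter (fun u => ¬ reachAvoid G i j u), g v u := by
      intro v
      rw [← Finset.sum_filter_add_sum_filter_not Finset.univ (fun u => reachAvoid G i j u)]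
    have hzero : ∑ v ∈ H, ∑ u ∈ H, g v u = 0 := by
      have h1 : ∑ v ∈ H, ∑ u ∈ H, g v u = ∑ u ∈ H, ∑ v ∈ H, g v u := Finset.sum_comm
      have h2 : ∑ u ∈ H, ∑ v ∈ H, g v u = - ∑ v ∈ H, ∑ u ∈ H, g v u := by
        rw [← Finset.sum_neg_distrib]
        refine Finset.sum_congr rfl fun u _ => ?_
        rw [← Finset.sum_neg_distrib]
        exact Finset.sum_congr rfl fun v _ => ga u v
      linarith [h1.trans h2]
    have houter : ∑ v ∈ H, ∑ u ∈ Finset.univ.filter (fun u => ¬ reachAvoid G i j u), g v u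
        = g j i := by
      rw [Finset.sum_eq_single j]
      · rw [Finset.sum_eq_single i]
        · intro u hu hui
          simp only [Finset.mem_filter, Finset.mem_univ, true_and] at hu
          refine gs j u fun hadj => hu ?_
          have := hclosed j u hjH hadj hui
          simpa [hH] using this
        · intro hi
          exact absurd (Finset.mem_filter.2 ⟨Finset.mem_univ _,
            by simpa [hH] using hiH⟩) hi
      · intro v hv hvj
        apply Finset.sum_eq_zero
        intro u hu
        simp only [Finset.mem_filter, Finset.mem_univ, true_and] at hu
        refine gs v u fun hadj => ?_
        by_cases hui : u = i
        · subst hui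
          exact hvj (reach_adj_eq hG hij (by simpa [hH] using hv) hadj)
        · exact hu (by simpa [hH] using hclosed v u hv hadj hui)
      · intro h; exact absurd hjH h
    calc g j i = ∑ v ∈ H, ∑ u ∈ Finset.univ.filter (fun u => ¬ reachAvoid G i j u), g v u :=
          houter.symm
      _ = ∑ v ∈ H, ((∑ u ∈ H, g v u) + ∑ u ∈ Finset.univ.filter (fun u => ¬ reachAvoid G i j u), g v u) - ∑ v ∈ H, ∑ u ∈ H, g v u := by
          rw [Finset.sum_add_distrib]; ring
      _ = ∑ v ∈ H, n v := by
          rw [hzero, sub_zero]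
          exact Finset.sum_congr rfl fun v _ => (split v).symm.trans (gc v)
  have h1 := key f m hanti hsupp hcons
  have h2 := key f' m' hanti' hsupp' hcons'
  have hmm : ∑ v ∈ H, m v = ∑ v ∈ H, m' v := by
    refine Finset.sum_congr rfl fun v hv => ?_
    exact hm v (hns v (by simpa [hH] using hv))
  have : f j i = f' j i := by rw [h1, h2, hmm]
  have := congrArg Neg.neg this
  rwa [← hanti, ← hanti'] at this
end

section
/- In an acyclic flow network, every directed edge in the flow-oriented controllable edge set lies in the downstream (out-tree) of some supplier vertex; that is, the union over all suppliers i of the downstreams D_i equals the full set of flow-oriented controllable edges E⃗_cf. -/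
/-- The supplier indicator `β_{ij} = 1`: the half-cluster `H_{ij}` contains a supplier. -/
def hasSupplier {V : Type*} (G : SimpleGraph V) (Vs : Set V) (i j : V) : Prop :=
  ∃ v ∈ Vs, reachAvoid G i j v

lemma reachAvoid_ne {V : Type*} {G : SimpleGraph V} {a b v : V} (hab : b ≠ a)
    (h : reachAvoid G a b v) : v ≠ a := by
  induction h with
  | refl => exact hab
  | tail _ step _ => exact step.2

lemma reachAvoid_walk {V : Type*} {G : SimpleGraph V} {a b v : V} (hab : b ≠ a)
    (h : reachAvoid G a b v) : ∃ p : G.Walk b v, a ∉ p.support := by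
  induction h with
  | refl => exact ⟨SimpleGraph.Walk.nil, by simp [Ne.symm hab]⟩
  | tail _ step ih =>
    obtain ⟨p, hp⟩ := ih
    refine ⟨p.concat step.1, ?_⟩
    rw [SimpleGraph.Walk.support_concat]
    simp only [List.concat_eq_append, List.mem_append, List.mem_singleton]
    rintro (h | h)
    · exact hp h
    · exact step.2 h.symm

/-- In an acyclic graph, the only neighbor of `a` inside the half-cluster `H_{ab}` is `b`. -/
lemma tree_uniq {V : Type*} {G : SimpleGraph V} (hG : G.IsAcyclic) {a b v : V}
    (hab : G.Adj a b) (h : reachAvoid G a b v) (hav : G.Adj a v) : v = b := by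
  classical
  obtain ⟨p, hp⟩ := reachAvoid_walk hab.ne' h
  have hq : a ∉ p.bypass.support := fun hh => hp (p.support_bypass_subset hh)
  have heq : (SimpleGraph.Walk.cons hav SimpleGraph.Walk.nil : G.Walk a v)
      = SimpleGraph.Walk.cons hab p.bypass :=
    Subtype.mk_eq_mk.mp (hG.path_unique
      ⟨SimpleGraph.Walk.cons hav SimpleGraph.Walk.nil, by simp [hav.ne]⟩
      ⟨SimpleGraph.Walk.cons hab p.bypass,
        (SimpleGraph.Walk.cons_isPath_iff _ _).2 ⟨p.bypass_isPath, hq⟩⟩)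
  have hsup := congrArg SimpleGraph.Walk.support heq
  rw [SimpleGraph.Walk.support_cons, SimpleGraph.Walk.support_cons,
    SimpleGraph.Walk.support_nil, SimpleGraph.Walk.support_eq_cons] at hsup
  rw [List.cons.injEq, List.cons.injEq] at hsup
  exact hsup.2.1

lemma reach_shift {V : Type*} {G : SimpleGraph V} (hG : G.IsAcyclic) {a b u v : V}
    (hab : G.Adj a b) (hau : G.Adj a u) (hub : u ≠ b)
    (h : reachAvoid G a b v) : reachAvoid G u a v := by
  induction h with
  | refl => exact Relation.ReflTransGen.single ⟨hab, Ne.symm hub⟩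
  | @tail c d hc step ih =>
    refine ih.tail ⟨step.1, fun hdu => ?_⟩
    subst hdu
    exact hub (tree_uniq hG hab (hc.tail step) hau)

/-- `cfRel G Vs f a b`: `(a,b)` is a directed edge of `E⃗_cf`, i.e. `{a,b}` is an
edge with controllable flow (`β_{ab} = β_{ba} = 1`) oriented along its (positive) flow. -/
def cfRel {V : Type*} (G : SimpleGraph V) (Vs : Set V) (f : V → V → ℝ) (a b : V) : Prop :=
  G.Adj a b ∧ 0 < f a b ∧ hasSupplier G Vs a b ∧ hasSupplier G Vs b a

/-- If flow enters `a` from `u`, the half-cluster `H_{au}` contains a supplier. -/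
lemma half_supplier {V : Type*} [Fintype V] {G : SimpleGraph V} (hG : G.IsAcyclic)
    {Vs : Set V} {m : V → ℝ} (hmc : ∀ v, v ∉ Vs → m v ≤ 0)
    {f : V → V → ℝ} (hanti : ∀ a b, f b a = - f a b)
    (hsupp : ∀ a b, ¬ G.Adj a b → f a b = 0)
    (hcons : ∀ v, ∑ u, f v u = m v)
    {a u : V} (hau : G.Adj a u) (hpos : 0 < f u a) : hasSupplier G Vs a u := by
  classical
  set S : Finset V := Finset.univ.filter (fun v => reachAvoid G a u v) with hS
  have hmem : ∀ v, v ∈ S ↔ reachAvoid G a u v := by simp [hS]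
  have hu : u ∈ S := (hmem u).2 Relation.ReflTransGen.refl
  have ha : a ∉ S := fun h => reachAvoid_ne hau.ne' ((hmem a).1 h) rfl
  have hclosed : ∀ v ∈ S, ∀ w, G.Adj v w → w ≠ a → w ∈ S := fun v hv w hvw hwa =>
    (hmem w).2 (((hmem v).1 hv).tail ⟨hvw, hwa⟩)
  have hzero : ∑ v ∈ S, ∑ w ∈ S, f v w = 0 := by
    have h1 : ∑ v ∈ S, ∑ w ∈ S, f v w = ∑ v ∈ S, ∑ w ∈ S, f w v := Finset.sum_comm
    have h2 : ∑ v ∈ S, ∑ w ∈ S, f w v = - ∑ v ∈ S, ∑ w ∈ S, f v w := by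
      rw [← Finset.sum_neg_distrib]
      exact Finset.sum_congr rfl fun v _ => by
        rw [← Finset.sum_neg_distrib]
        exact Finset.sum_congr rfl fun w _ => hanti v w
    linarith [h1.trans h2]
  have hbound : ∀ v ∈ S, ∑ w ∈ Sᶜ, f v w = f v a := by
    intro v hv
    refine Finset.sum_eq_single_of_mem a (Finset.mem_compl.2 ha) fun w hw hwa => ?_
    by_cases hadj : G.Adj v w
    · exact absurd (hclosed v hv w hadj hwa) (Finset.mem_compl.1 hw)
    · exact hsupp v w hadj
  have hsum1 : ∑ v ∈ S, m v = f u a := by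
    have : ∑ v ∈ S, m v = ∑ v ∈ S, (∑ w ∈ S, f v w + ∑ w ∈ Sᶜ, f v w) :=
      Finset.sum_congr rfl fun v _ => by rw [Finset.sum_add_sum_compl, hcons]
    rw [this, Finset.sum_add_distrib, hzero, zero_add]
    rw [Finset.sum_congr rfl hbound]
    refine Finset.sum_eq_single_of_mem u hu fun v hv hvu => ?_
    by_cases hadj : G.Adj v a
    · exact absurd (tree_uniq hG hau ((hmem v).1 hv) hadj.symm) hvu
    · exact hsupp v a hadj
  by_contra hno
  have : ∀ v ∈ S, m v ≤ 0 := by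
    intro v hv
    refine hmc v fun hvVs => hno ⟨v, hvVs, (hmem v).1 hv⟩
  linarith [Finset.sum_nonpos this, hsum1]

section Main
variable {V : Type*} [Fintype V] {G : SimpleGraph V} (hG : G.IsTree)
    {Vs : Set V} {m : V → ℝ}
    (hmc : ∀ v, v ∉ Vs → m v ≤ 0)
    {f : V → V → ℝ}
    (hanti : ∀ a b, f b a = - f a b)
    (hsupp : ∀ a b, ¬ G.Adj a b → f a b = 0)
    (hcons : ∀ v, ∑ u, f v u = m v)

include hG hmc hanti hsupp hcons in
/-- A consumer with outgoing controllable flow has incoming controllable flow. -/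
lemma step_back {a b : V} (hab : cfRel G Vs f a b) (ha : a ∉ Vs) :
    ∃ c, cfRel G Vs f c a := by
  obtain ⟨hadj, hpos, hS1, hS2⟩ := hab
  have hma : m a ≤ 0 := hmc a ha
  have hex : ∃ u, f a u < 0 := by
    by_contra hno
    push_neg at hno
    have hle : f a b ≤ ∑ u, f a u :=
      Finset.single_le_sum (fun u _ => hno u) (Finset.mem_univ b)
    rw [hcons] at hle
    linarith
  obtain ⟨u, hu⟩ := hex
  have hua : 0 < f u a := by rw [hanti]; linarith
  have hadj' : G.Adj a u := by
    by_contra h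
    rw [hsupp a u h] at hu
    exact lt_irrefl _ hu
  have hub : u ≠ b := fun h => by rw [h] at hu; linarith
  refine ⟨u, hadj'.symm, hua, ?_, ?_⟩
  · -- hasSupplier G Vs u a
    obtain ⟨v, hv, hr⟩ := hS1
    exact ⟨v, hv, reach_shift hG.2 hadj hadj' hub hr⟩
  · -- hasSupplier G Vs a u
    exact half_supplier hG.2 hmc hanti hsupp hcons hadj' hua

include hG hanti in
lemma chain_stay {a b c : V} (hab : cfRel G Vs f a b)
    (h : Relation.ReflTransGen (cfRel G Vs f) b c) : reachAvoid G a b c := by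
  induction h with
  | refl => exact Relation.ReflTransGen.refl
  | @tail x d hx step ih =>
    refine ih.tail ⟨step.1, fun hda => ?_⟩
    rw [hda] at step
    have hxb : x = b := tree_uniq hG.2 hab.1 ih step.1.symm
    have h1 : 0 < f x a := step.2.1
    have h2 : 0 < f a b := hab.2.1
    rw [hxb, hanti] at h1
    linarith

include hG hanti in
lemma cf_wf : WellFounded (cfRel G Vs f) := by
  have hirr : ∀ a, ¬ Relation.TransGen (cfRel G Vs f) a a := by
    intro a h
    obtain ⟨x, hax, hxa⟩ := Relation.TransGen.head'_iff.1 h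
    exact reachAvoid_ne hax.1.ne' (chain_stay hG hanti hax hxa) rfl
  have : IsTrans V (Relation.TransGen (cfRel G Vs f)) := ⟨fun _ _ _ => .trans⟩
  have : IsIrrefl V (Relation.TransGen (cfRel G Vs f)) := ⟨hirr⟩
  exact Subrelation.wf (fun h => Relation.TransGen.single h)
    (Finite.wellFounded_of_trans_of_irrefl _)

end Main

/-- in an acyclic flow network, the union over suppliers `i` of the
downstreams `D_i` (out-trees of `i` in `(V_cf, E⃗_cf)`) equals `E⃗_cf`. -/
theorem stmt_4 {V : Type*} [Fintype V] (G : SimpleGraph V) (hG : G.IsTree)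
    (Vs : Set V) (m : V → ℝ)
    (hms : ∀ v ∈ Vs, 0 < m v) (hmc : ∀ v, v ∉ Vs → m v ≤ 0)
    (hsum : ∑ v, m v = 0)
    (f : V → V → ℝ)
    (hanti : ∀ a b, f b a = - f a b)
    (hsupp : ∀ a b, ¬ G.Adj a b → f a b = 0)
    (hcons : ∀ v, ∑ u, f v u = m v) :
    ∀ a b, cfRel G Vs f a b ↔
      ∃ i ∈ Vs, Relation.ReflTransGen (cfRel G Vs f) i a ∧ cfRel G Vs f a b := by
  intro a b
  constructor
  · intro hab
    suffices h : ∀ x, (∃ y, cfRel G Vs f x y) →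
        ∃ i ∈ Vs, Relation.ReflTransGen (cfRel G Vs f) i x by
      obtain ⟨i, hi, hr⟩ := h a ⟨b, hab⟩
      exact ⟨i, hi, hr, hab⟩
    intro x0
    refine (cf_wf (Vs := Vs) hG hanti).induction
      (C := fun x => (∃ y, cfRel G Vs f x y) →
        ∃ i ∈ Vs, Relation.ReflTransGen (cfRel G Vs f) i x) x0 ?_
    rintro x ih ⟨y, hxy⟩
    by_cases hx : x ∈ Vs
    · exact ⟨x, hx, Relation.ReflTransGen.refl⟩
    · obtain ⟨c, hc⟩ := step_back hG hmc hanti hsupp hcons hxy hx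
      obtain ⟨i, hi, hr⟩ := ih c hc ⟨x, hc⟩
      exact ⟨i, hi, hr.tail hc⟩
  · rintro ⟨i, hi, hr, hab'⟩
    exact hab'
end

section
/- Consider the coupled linear-max ODE system φ̂̇_i(t) = −k_φ ( φ̂_i(t) − max_{j ∈ V_i^out} max{ f_{ij}, φ̂_j(t) } ) on a finite directed acyclic graph with constant f ≥ 0, gain k_φ > 0, and initial conditions φ̂_i(0) = 0. Then every φ̂_i(t) converges as t → ∞ to the maximum downstream flow φ_i (the maximum of f over the out-tree of i, with value 0 if the out-tree is empty). -/
open Filter Real intervalIntegral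

/-- Scalar linear ODE convergence: if `x' = -k (x - u)` with `k > 0`, `u` continuous and
`u → L` at `+∞`, then `x → L`. -/
lemma ode_tendsto_aux (k L : ℝ) (hk : 0 < k) (u x : ℝ → ℝ) (hu : Continuous u)
    (hx : ∀ t, HasDerivAt x (-k * (x t - u t)) t)
    (hlim : Tendsto u atTop (nhds L)) : Tendsto x atTop (nhds L) := by
  rw [Metric.tendsto_atTop] at hlim ⊢
  intro ε hε
  obtain ⟨T, hT⟩ := hlim (ε / 3) (by linarith)
  set g : ℝ → ℝ := fun t => Real.exp (k * t) * (x t - L) with hgdef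
  have hgd : ∀ t, HasDerivAt g (k * Real.exp (k * t) * (u t - L)) t := by
    intro t
    have he : HasDerivAt (fun t => Real.exp (k * t)) (Real.exp (k * t) * k) t :=
      (Real.hasDerivAt_exp (k * t)).comp t (by simpa using (hasDerivAt_id t).const_mul k)
    have h2 := he.mul ((hx t).sub_const L)
    exact h2.congr_deriv (by ring)
  have hFc : Continuous fun s => k * Real.exp (k * s) * (u s - L) := by
    fun_prop
  have hGc : Continuous fun s => k * Real.exp (k * s) * (ε / 3) := by
    fun_prop
  have key : ∀ t, T ≤ t → g t - g T = ∫ s in T..t, k * Real.exp (k * s) * (u s - L) := by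
    intro t _
    exact (integral_eq_sub_of_hasDerivAt (fun s _ => hgd s)
      (hFc.intervalIntegrable T t)).symm
  have hGint : ∀ t, T ≤ t →
      (∫ s in T..t, k * Real.exp (k * s) * (ε / 3))
        = ε / 3 * Real.exp (k * t) - ε / 3 * Real.exp (k * T) := by
    intro t _
    have : ∀ s ∈ Set.uIcc T t, HasDerivAt (fun s => ε / 3 * Real.exp (k * s))
        (k * Real.exp (k * s) * (ε / 3)) s := by
      intro s _
      have he : HasDerivAt (fun s => Real.exp (k * s)) (Real.exp (k * s) * k) s :=
        (Real.hasDerivAt_exp (k * s)).comp s (by simpa using (hasDerivAt_id s).const_mul k)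
      have := he.const_mul (ε / 3)
      exact this.congr_deriv (by ring)
    exact integral_eq_sub_of_hasDerivAt this (hGc.intervalIntegrable T t)
  have hbound : ∀ t, T ≤ t → |g t - g T| ≤ ε / 3 * Real.exp (k * t) := by
    intro t ht
    rw [key t ht]
    calc |∫ s in T..t, k * Real.exp (k * s) * (u s - L)|
        ≤ ∫ s in T..t, |k * Real.exp (k * s) * (u s - L)| :=
          abs_integral_le_integral_abs ht
      _ ≤ ∫ s in T..t, k * Real.exp (k * s) * (ε / 3) := by
          apply integral_mono_on ht (hFc.abs.intervalIntegrable T t)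
            (hGc.intervalIntegrable T t)
          intro s hs
          have hus : |u s - L| ≤ ε / 3 := by
            have := hT s hs.1
            rw [Real.dist_eq] at this
            linarith
          rw [abs_mul, abs_mul, abs_of_pos hk, abs_of_pos (Real.exp_pos _)]
          have hkp : 0 ≤ k * Real.exp (k * s) := by positivity
          exact mul_le_mul_of_nonneg_left hus hkp
      _ = ε / 3 * Real.exp (k * t) - ε / 3 * Real.exp (k * T) := hGint t ht
      _ ≤ ε / 3 * Real.exp (k * t) := by
          have : 0 ≤ ε / 3 * Real.exp (k * T) := by positivity
          linarith
  -- |x t - L| ≤ exp(-(k t)) |g T| + ε/3 for t ≥ T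
  have hxb : ∀ t, T ≤ t → |x t - L| ≤ Real.exp (-(k * t)) * |g T| + ε / 3 := by
    intro t ht
    have hgt : |g t| ≤ |g T| + ε / 3 * Real.exp (k * t) := by
      have := hbound t ht
      have h1 : |g t| ≤ |g T| + |g t - g T| := by
        have := abs_sub_abs_le_abs_sub (g t) (g T)
        linarith [abs_sub_abs_le_abs_sub (g t) (g T)]
      linarith
    have hxeq : |x t - L| = Real.exp (-(k * t)) * |g t| := by
      rw [hgdef]
      simp only [abs_mul, abs_of_pos (Real.exp_pos (k * t))]
      rw [← mul_assoc, ← Real.exp_add]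
      simp
    rw [hxeq]
    have hexp : (0:ℝ) < Real.exp (-(k * t)) := Real.exp_pos _
    calc Real.exp (-(k * t)) * |g t|
        ≤ Real.exp (-(k * t)) * (|g T| + ε / 3 * Real.exp (k * t)) :=
          mul_le_mul_of_nonneg_left hgt hexp.le
      _ = Real.exp (-(k * t)) * |g T| + ε / 3 * (Real.exp (-(k * t)) * Real.exp (k * t)) := by
          ring
      _ = Real.exp (-(k * t)) * |g T| + ε / 3 := by
          rw [← Real.exp_add]; simp
  -- choose N
  have hdecay : Tendsto (fun t => Real.exp (-(k * t)) * |g T|) atTop (nhds 0) := by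
    have h1 : Tendsto (fun t => k * t) atTop atTop :=
      tendsto_id.const_mul_atTop hk
    have h2 : Tendsto (fun t => Real.exp (-(k * t))) atTop (nhds 0) :=
      Real.tendsto_exp_neg_atTop_nhds_zero.comp h1
    simpa using h2.mul_const |g T|
  rw [Metric.tendsto_atTop] at hdecay
  obtain ⟨N', hN'⟩ := hdecay (ε / 3) (by linarith)
  refine ⟨max T N', fun t ht => ?_⟩
  have hT' : T ≤ t := le_trans (le_max_left _ _) ht
  have hN'' : N' ≤ t := le_trans (le_max_right _ _) ht
  have h1 := hxb t hT'
  have h2 := hN' t hN''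
  rw [Real.dist_eq, sub_zero] at h2
  have h3 : Real.exp (-(k * t)) * |g T| < ε / 3 := lt_of_abs_lt h2
  rw [Real.dist_eq]
  linarith

lemma fold_max_tendsto {ι : Type*} [DecidableEq ι] (s : Finset ι) (g : ι → ℝ → ℝ) (L : ι → ℝ)
    (h : ∀ j ∈ s, Tendsto (g j) atTop (nhds (L j))) :
    Tendsto (fun t => s.fold max 0 (fun j => g j t)) atTop (nhds (s.fold max 0 L)) := by
  induction s using Finset.induction_on with
  | empty => simpa using tendsto_const_nhds
  | insert _ _ ha ih =>
    rename_i a s'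
    simp only [Finset.fold_insert ha]
    exact (h a (Finset.mem_insert_self a s')).max
      (ih fun j hj => h j (Finset.mem_insert_of_mem hj))

lemma fold_max_continuous {ι : Type*} [DecidableEq ι] (s : Finset ι) (g : ι → ℝ → ℝ)
    (h : ∀ j ∈ s, Continuous (g j)) :
    Continuous (fun t => s.fold max 0 (fun j => g j t)) := by
  induction s using Finset.induction_on with
  | empty => simpa using continuous_const
  | insert _ _ ha ih =>
    rename_i a s'
    simp only [Finset.fold_insert ha]
    exact (h a (Finset.mem_insert_self a s')).max
      (ih fun j hj => h j (Finset.mem_insert_of_mem hj))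

/-- for the coupled ODE system
`φ̂̇_i = -k_φ (φ̂_i - max_{j ∈ V_i^out} max{f_{ij}, φ̂_j})` on a finite DAG with
constant `f ≥ 0`, `k_φ > 0` and `φ̂_i(0) = 0`, every `φ̂_i(t)` converges to the
maximum downstream flow `φ_i` (max of `f` over the out-tree of `i`, `0` if empty).
The finite max over the out-neighborhood is computed with `Finset.fold max 0`. -/
theorem stmt_11 {V : Type*} [Fintype V] [DecidableEq V]
    (r : V → V → Prop) [DecidableRel r]
    (hacyc : ∀ i, ¬ Relation.TransGen r i i)
    (f : V → V → ℝ) (hf : ∀ i j, r i j → 0 ≤ f i j)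
    (φ : V → ℝ)
    (hφ : ∀ i, IsGreatest
      (insert (0:ℝ) {x | ∃ j k, Relation.ReflTransGen r i j ∧ r j k ∧ x = f j k}) (φ i))
    (kφ : ℝ) (hk : 0 < kφ)
    (φhat : V → ℝ → ℝ) (h0 : ∀ i, φhat i 0 = 0)
    (hode : ∀ i t, HasDerivAt (φhat i)
      (-kφ * (φhat i t -
        (Finset.univ.filter (fun j => r i j)).fold max 0 (fun j => max (f i j) (φhat j t)))) t) :
    ∀ i, Filter.Tendsto (φhat i) Filter.atTop (nhds (φ i)) := by
  haveI : IsTrans V (fun a b => Relation.TransGen r b a) := ⟨fun a b c h1 h2 => h2.trans h1⟩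
  haveI : IsIrrefl V (fun a b => Relation.TransGen r b a) := ⟨fun a h => hacyc a h⟩
  have hwf := Finite.wellFounded_of_trans_of_irrefl (fun a b : V => Relation.TransGen r b a)
  have hφ0 : ∀ i, 0 ≤ φ i := fun i => (hφ i).2 (Set.mem_insert _ _)
  have hmono : ∀ i j, r i j → φ j ≤ φ i := by
    intro i j hij
    apply (hφ i).2
    rcases Set.mem_insert_iff.1 (hφ j).1 with h0' | ⟨a, b, hra, hab, hx⟩
    · exact Set.mem_insert_iff.2 (Or.inl h0')
    · exact Set.mem_insert_iff.2
        (Or.inr ⟨a, b, Relation.ReflTransGen.head hij hra, hab, hx⟩)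
  have hfle : ∀ i j, r i j → f i j ≤ φ i := fun i j hij =>
    (hφ i).2 (Set.mem_insert_iff.2 (Or.inr ⟨i, j, Relation.ReflTransGen.refl, hij, rfl⟩))
  have key : ∀ i, (Finset.univ.filter (fun j => r i j)).fold max 0
      (fun j => max (f i j) (φ j)) = φ i := by
    intro i
    apply le_antisymm
    · rw [Finset.fold_max_le]
      refine ⟨hφ0 i, fun j hj => ?_⟩
      rw [Finset.mem_filter] at hj
      exact max_le (hfle i j hj.2) (hmono i j hj.2)
    · rcases Set.mem_insert_iff.1 (hφ i).1 with h0' | ⟨a, b, hra, hab, hx⟩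
      · rw [h0', Finset.le_fold_max]
        exact Or.inl le_rfl
      · rcases hra.cases_head with heq | ⟨c, hic, hca⟩
        · subst heq
          rw [hx, Finset.le_fold_max]
          refine Or.inr ⟨b, Finset.mem_filter.2 ⟨Finset.mem_univ _, hab⟩, le_max_left _ _⟩
        · rw [hx, Finset.le_fold_max]
          refine Or.inr ⟨c, Finset.mem_filter.2 ⟨Finset.mem_univ _, hic⟩, ?_⟩
          have : f a b ≤ φ c :=
            (hφ c).2 (Set.mem_insert_iff.2 (Or.inr ⟨a, b, hca, hab, rfl⟩))
          exact le_trans this (le_max_right _ _)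
  have hcont : ∀ j, Continuous (φhat j) :=
    fun j => continuous_iff_continuousAt.2 fun t => (hode j t).continuousAt
  intro i
  refine hwf.induction
    (C := fun i => Filter.Tendsto (φhat i) Filter.atTop (nhds (φ i))) i ?_
  intro i IH
  set s := Finset.univ.filter (fun j => r i j) with hs
  have hu : Tendsto (fun t => s.fold max 0 (fun j => max (f i j) (φhat j t))) atTop
      (nhds (s.fold max 0 (fun j => max (f i j) (φ j)))) := by
    apply fold_max_tendsto
    intro j hj
    rw [hs, Finset.mem_filter] at hj
    exact tendsto_const_nhds.max (IH j (Relation.TransGen.single hj.2))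
  rw [key i] at hu
  have huc : Continuous (fun t => s.fold max 0 (fun j => max (f i j) (φhat j t))) :=
    fold_max_continuous _ _ fun j _ => continuous_const.max (hcont j)
  exact ode_tendsto_aux kφ (φ i) hk _ (φhat i) huc (hode i) hu
end

section
/- Let G = (V, E) be a finite graph with V partitioned into suppliers and consumers, and consider the iterative Boolean update β̂_{ij} ← β̂_{ij} ∨ ⋁_{k ≠ i, (j,k) ∈ E⃗⁺} β̂_{jk} applied synchronously to all ordered pairs (i,j) with {i,j} ∈ E, initialized with β̂_{ij} = 1 iff j is a supplier. If G is a tree with N vertices, then after at most N − 2 iterations, β̂_{ij} equals the supplier indicator β_{ij}, which is 1 iff the connected component of G ∖ {i} containing j contains a supplier. -/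
open SimpleGraph Relation

/-- In a tree, if `i ~ j`, `j ~ k`, `k ≠ i`, there is no path from `k` to `i`
avoiding `j`. -/
lemma tree_no_detour {V : Type*} {G : SimpleGraph V} (hG : G.IsTree)
    {i j k : V} (hij : G.Adj i j) (hjk : G.Adj j k) (hki : k ≠ i)
    (q : G.Walk k i) (hq : q.IsPath) (hqj : j ∉ q.support) : False := by
  have hw1 : (q.concat hij).IsPath := by
    rw [← SimpleGraph.Walk.isPath_reverse_iff, SimpleGraph.Walk.reverse_concat]
    exact ((SimpleGraph.Walk.isPath_reverse_iff q).2 hq).cons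
      (by simpa [SimpleGraph.Walk.support_reverse] using hqj)
  have hw2 : (SimpleGraph.Walk.cons hjk.symm SimpleGraph.Walk.nil : G.Walk k j).IsPath := by
    simp [SimpleGraph.Walk.isPath_def, hjk.ne']
  have := hG.IsAcyclic.path_unique ⟨q.concat hij, hw1⟩ ⟨_, hw2⟩
  have hlen : (q.concat hij).length =
      (SimpleGraph.Walk.cons hjk.symm SimpleGraph.Walk.nil : G.Walk k j).length := by
    rw [Subtype.mk.injEq] at this; rw [this]
  rw [SimpleGraph.Walk.length_concat] at hlen
  simp at hlen
  exact hki (SimpleGraph.Walk.eq_of_length_eq_zero (SimpleGraph.Walk.nil_iff_length_eq.mp hlen))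

/-- From a `ReflTransGen` avoiding `i`, extract a walk avoiding `i`. -/
lemma rtg_to_walk {V : Type*} {G : SimpleGraph V} {i v : V} :
    ∀ (a : V), Relation.ReflTransGen (fun a b => G.Adj a b ∧ b ≠ i) a v → a ≠ i →
      ∃ p : G.Walk a v, ∀ x ∈ p.support, x ≠ i := by
  intro a h
  induction h using Relation.ReflTransGen.head_induction_on with
  | refl => intro ha; exact ⟨SimpleGraph.Walk.nil, by simpa using ha⟩
  | head hab hbv ih =>
    intro ha
    obtain ⟨p, hp⟩ := ih hab.2
    refine ⟨SimpleGraph.Walk.cons hab.1 p, ?_⟩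
    intro x hx
    rw [SimpleGraph.Walk.support_cons, List.mem_cons] at hx
    rcases hx with h1 | h1
    · exact h1 ▸ ha
    · exact hp x h1

/-- From a walk avoiding `i`, build a `ReflTransGen` avoiding `i`. -/
lemma walk_to_rtg {V : Type*} {G : SimpleGraph V} (i : V) :
    ∀ {a b : V} (p : G.Walk a b), i ∉ p.support →
      Relation.ReflTransGen (fun a b => G.Adj a b ∧ b ≠ i) a b := by
  intro a b p
  induction p with
  | nil => intro _; exact Relation.ReflTransGen.refl
  | @cons u x w h q ih =>
    intro hi
    rw [SimpleGraph.Walk.support_cons] at hi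
    simp only [List.mem_cons, not_or] at hi
    exact Relation.ReflTransGen.head ⟨h, fun hx => hi.2 (hx ▸ q.start_mem_support)⟩
      (ih hi.2)

/-- on a tree with `N` vertices, the synchronous Boolean iteration
`β̂_{ij} ← β̂_{ij} ∨ ⋁_{k ≠ i, {j,k} ∈ E} β̂_{jk}`, initialized with
`β̂_{ij} = 1 ↔ j` is a supplier, converges after at most `N - 2` steps to the
supplier indicator `β_{ij}`, which holds iff the connected component of
`G ∖ {i}` containing `j` (the half-cluster `H_{ij}`) contains a supplier. -/
theorem stmt_13 {V : Type*} [Fintype V] (G : SimpleGraph V) (hG : G.IsTree)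
    (Vs : Set V)
    (βhat : ℕ → V → V → Prop)
    (h0 : ∀ i j, βhat 0 i j ↔ j ∈ Vs)
    (hstep : ∀ n i j, βhat (n+1) i j ↔ βhat n i j ∨ ∃ k, k ≠ i ∧ G.Adj j k ∧ βhat n j k) :
    ∀ n, Fintype.card V - 2 ≤ n → ∀ i j, G.Adj i j →
      (βhat n i j ↔ ∃ v ∈ Vs, Relation.ReflTransGen (fun a b => G.Adj a b ∧ b ≠ i) j v) := by
  classical
  have mono : ∀ i j m n, m ≤ n → βhat m i j → βhat n i j := by
    intro i j m n hmn
    induction n, hmn using Nat.le_induction with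
    | base => exact id
    | succ n _ ih => exact fun h => (hstep n i j).2 (Or.inl (ih h))
  -- completeness core: short enough walks give βhat
  have comp : ∀ n (i j v : V), v ∈ Vs → ∀ p : G.Walk j v, p.support.Nodup →
      i ∉ p.support → p.length ≤ n → βhat n i j := by
    intro n
    induction n with
    | zero =>
      intro i j v hv p _ _ hl
      cases p with
      | nil => exact (h0 i j).2 hv
      | cons h q => simp at hl
    | succ n ih =>
      intro i j v hv p hnd hi hl
      cases p with
      | nil => exact mono _ _ 0 (n+1) (Nat.zero_le _) ((h0 i j).2 hv)
      | @cons _ k _ hadj q =>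
        rw [SimpleGraph.Walk.support_cons] at hnd hi
        simp only [List.mem_cons, not_or] at hi
        have hk : k ≠ i := fun h => hi.2 (h ▸ q.start_mem_support)
        have hjn : j ∉ q.support := (List.nodup_cons.1 hnd).1
        have : βhat n j k := ih j k v hv q (List.nodup_cons.1 hnd).2 hjn
          (by simpa using hl)
        exact (hstep n i j).2 (Or.inr ⟨k, hk, hadj, this⟩)
  -- soundness
  have sound : ∀ n i j, G.Adj i j → βhat n i j →
      ∃ v ∈ Vs, Relation.ReflTransGen (fun a b => G.Adj a b ∧ b ≠ i) j v := by
    intro n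
    induction n with
    | zero => exact fun i j _ h => ⟨j, (h0 i j).1 h, Relation.ReflTransGen.refl⟩
    | succ n ih =>
      intro i j hij h
      rcases (hstep n i j).1 h with h | ⟨k, hk, hjk, hbk⟩
      · exact ih i j hij h
      · obtain ⟨v, hv, hrt⟩ := ih j k hjk hbk
        obtain ⟨w, hw⟩ := rtg_to_walk k hrt hjk.ne'
        set p := w.bypass with hp
        have hpth : p.IsPath := w.bypass_isPath
        have hpj : ∀ x ∈ p.support, x ≠ j := fun x hx =>
          hw x (w.support_bypass_subset hx)
        have hpi : i ∉ p.support := by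
          intro hi'
          exact tree_no_detour hG hij hjk hk (p.takeUntil i hi') (hpth.takeUntil hi')
            (fun hj => hpj j (p.support_takeUntil_subset hi' hj) rfl)
        refine ⟨v, hv, Relation.ReflTransGen.head ⟨hjk, hk⟩ (walk_to_rtg i p hpi)⟩
  intro n hn i j hij
  constructor
  · exact sound n i j hij
  · rintro ⟨v, hv, hrt⟩
    obtain ⟨w, hw⟩ := rtg_to_walk j hrt hij.ne'
    set p := w.bypass with hp
    have hpth : p.IsPath := w.bypass_isPath
    have hpi : i ∉ p.support := fun hx => hw i (w.support_bypass_subset hx) rfl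
    -- length bound
    have hnd : p.support.Nodup := hpth.support_nodup
    have hsub : p.support.toFinset ⊆ Finset.univ.erase i := by
      intro x hx
      rw [List.mem_toFinset] at hx
      exact Finset.mem_erase.2 ⟨fun h => hpi (h ▸ hx), Finset.mem_univ x⟩
    have hcard : p.support.length ≤ Fintype.card V - 1 := by
      have h1 := Finset.card_le_card hsub
      rw [List.toFinset_card_of_nodup hnd, Finset.card_erase_of_mem (Finset.mem_univ i),
        Finset.card_univ] at h1
      exact h1
    have hlen : p.length ≤ n := by
      have := SimpleGraph.Walk.length_support p
      omega
    exact comp n i j v hv p hnd hpi hlen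
end

section
/- Any two distinct consumer clusters in an acyclic flow network are disjoint. -/
/-- Undirected adjacency in the flow-oriented controllable subgraph. -/
def cfAdj {V : Type*} (G : SimpleGraph V) (Vs : Set V) (f : V → V → ℝ) (a b : V) : Prop :=
  cfRel G Vs f a b ∨ cfRel G Vs f b a

/-- `(j,k)` belongs to the downstream (out-tree) `D_i` of vertex `i` in `(V_cf, E⃗_cf)`. -/
def Dmem {V : Type*} (G : SimpleGraph V) (Vs : Set V) (f : V → V → ℝ) (i j k : V) : Prop :=
  Relation.ReflTransGen (cfRel G Vs f) i j ∧ cfRel G Vs f j k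

/-- `(j,k)` is a maximum downstream edge (MDE) of vertex `i`: an argmax of
`f_{pq}/f̄_{pq}` over `D_i`. -/
def isMDE {V : Type*} (G : SimpleGraph V) (Vs : Set V) (f fbar : V → V → ℝ)
    (i j k : V) : Prop :=
  Dmem G Vs f i j k ∧ ∀ p q, Dmem G Vs f i p q → f p q / fbar p q ≤ f j k / fbar j k

/-- `(j,k)` is a maximum downstream edge of some supplier vertex (MDES). -/
def isMDES {V : Type*} (G : SimpleGraph V) (Vs : Set V) (f fbar : V → V → ℝ)
    (j k : V) : Prop :=
  ∃ i ∈ Vs, isMDE G Vs f fbar i j k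

/-- A consumer cluster: a nonempty connected set of consumers in the controllable
subgraph, with no internal MDES, such that every controllable edge between an
outside consumer and the cluster is an MDES, and with at least one MDES of
`M_{s→c}` terminating in it. -/
def ConsumerCluster {V : Type*} (G : SimpleGraph V) (Vs : Set V)
    (f fbar : V → V → ℝ) (C : Set V) : Prop :=
  C.Nonempty ∧
  (∀ v ∈ C, v ∉ Vs) ∧
  (∀ u ∈ C, ∀ v ∈ C,
    Relation.ReflTransGen (fun a b => cfAdj G Vs f a b ∧ b ∈ C) u v) ∧
  (∀ j ∈ C, ∀ k ∈ C, ¬ isMDES G Vs f fbar j k) ∧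
  (∀ i j, i ∉ C → i ∉ Vs → j ∈ C → cfAdj G Vs f i j →
    isMDES G Vs f fbar i j ∨ isMDES G Vs f fbar j i) ∧
  (∃ i j, isMDES G Vs f fbar i j ∧ j ∉ Vs ∧ j ∈ C)


lemma cluster_subset_of_mem {V : Type*} (G : SimpleGraph V) (Vs : Set V)
    (f fbar : V → V → ℝ) (C₁ C₂ : Set V)
    (h₁ : ConsumerCluster G Vs f fbar C₁) (h₂ : ConsumerCluster G Vs f fbar C₂)
    (x : V) (hx1 : x ∈ C₁) (hx2 : x ∈ C₂) : C₁ ⊆ C₂ := by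
  obtain ⟨-, hcons1, hconn1, hmde1, -, -⟩ := h₁
  obtain ⟨-, -, -, hmde2, hedge2, -⟩ := h₂
  intro u hu
  have hpath := hconn1 x hx1 u hu
  clear hu
  suffices h : u ∈ C₁ ∧ u ∈ C₂ from h.2
  induction hpath with
  | refl => exact ⟨hx1, hx2⟩
  | @tail b c hxb hbc ih =>
    obtain ⟨hadj, hc1⟩ := hbc
    obtain ⟨hb1, hb2⟩ := ih
    refine ⟨hc1, ?_⟩
    by_contra hc2
    have := hedge2 c b hc2 (hcons1 c hc1) hb2 (Or.symm hadj)
    rcases this with h | h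
    · exact hmde1 c hc1 b hb1 h
    · exact hmde1 b hb1 c hc1 h

/-- any two distinct consumer clusters in an acyclic flow network
are disjoint. -/
theorem stmt_14 {V : Type*} [Fintype V] (G : SimpleGraph V) (hG : G.IsTree)
    (Vs : Set V) (m : V → ℝ)
    (hms : ∀ v ∈ Vs, 0 < m v) (hmc : ∀ v, v ∉ Vs → m v ≤ 0)
    (hsum : ∑ v, m v = 0)
    (f fbar : V → V → ℝ)
    (hanti : ∀ a b, f b a = - f a b)
    (hsupp : ∀ a b, ¬ G.Adj a b → f a b = 0)
    (hcons : ∀ v, ∑ u, f v u = m v)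
    (hfbar : ∀ a b, G.Adj a b → 0 < fbar a b)
    (C₁ C₂ : Set V)
    (h₁ : ConsumerCluster G Vs f fbar C₁) (h₂ : ConsumerCluster G Vs f fbar C₂)
    (hne : C₁ ≠ C₂) :
    Disjoint C₁ C₂ := by
  rw [Set.disjoint_left]
  intro x hx1 hx2
  exact hne (le_antisymm
    (cluster_subset_of_mem G Vs f fbar C₁ C₂ h₁ h₂ x hx1 hx2)
    (cluster_subset_of_mem G Vs f fbar C₂ C₁ h₂ h₁ x hx2 hx1))
end
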